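/- For every natural number n, any set of n distinct lines divides the plane into at most n(n+1)/2 + 1 regions; that is, if L is a finite set of n lines in ℝ², then the number of connected components of the complement ℝ² \ ⋃_{ℓ∈L} ℓ is at most n(n+1)/2 + 1. -/

import Mathlib

noncomputable section LinesAux

variable {ι : Type*} [DecidableEq ι]

/-- affine functional on ℝ² attached to index `j`. -/
def fA (c : ι → ℝ × ℝ) (d : ι → ℝ) (j : ι) (p : ℝ × ℝ) : ℝ :=
  (c j).1 * p.1 + (c j).2 * p.2 + d j

def sv2 (S : Finset ι) (c : ι → ℝ × ℝ) (d : ι → ℝ) (p : ℝ × ℝ) : ι → Bool :=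
  fun j => decide (j ∈ S ∧ 0 < fA c d j p)

def dom2 (S : Finset ι) (c : ι → ℝ × ℝ) (d : ι → ℝ) : Set (ℝ × ℝ) :=
  {p | ∀ j ∈ S, fA c d j p ≠ 0}

def sv1 (S : Finset ι) (a b : ι → ℝ) (t : ℝ) : ι → Bool :=
  fun j => decide (j ∈ S ∧ 0 < a j * t + b j)

def dom1 (S : Finset ι) (a b : ι → ℝ) : Set ℝ :=
  {t | ∀ j ∈ S, a j * t + b j ≠ 0}

lemma finite_sv_image {α : Type*} (S : Finset ι) (P : ι → α → Prop) [∀ j x, Decidable (P j x)]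
    (D : Set α) :
    ((fun (x : α) => fun j => decide (j ∈ S ∧ P j x)) '' D).Finite := by
  have hfin : Finite ↥{g : ι → Bool | ∀ j, g j = true → j ∈ S} := by
    refine Finite.of_injective (fun g => (fun j : ↥S => g.1 j)) ?_
    intro g g' h
    ext j
    by_cases hj : j ∈ S
    · exact congrFun h ⟨j, hj⟩
    · have h1 : g.1 j = false := by
        cases hgj : g.1 j
        · rfl
        · exact absurd (g.2 j hgj) hj
      have h2 : g'.1 j = false := by
        cases hgj : g'.1 j
        · rfl
        · exact absurd (g'.2 j hgj) hj
      rw [h1, h2]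
  refine Set.Finite.subset (Set.finite_coe_iff.mp hfin) ?_
  rintro g ⟨x, -, rfl⟩ j hj
  exact (of_decide_eq_true hj).1

lemma sv1_image_finite (S : Finset ι) (a b : ι → ℝ) (D : Set ℝ) :
    (sv1 S a b '' D).Finite :=
  finite_sv_image S (fun j t => 0 < a j * t + b j) D

lemma sv2_image_finite (S : Finset ι) (c : ι → ℝ × ℝ) (d : ι → ℝ) (D : Set (ℝ × ℝ)) :
    (sv2 S c d '' D).Finite :=
  finite_sv_image S (fun j p => 0 < fA c d j p) D

lemma oneD_card (S : Finset ι) (a b : ι → ℝ) :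
    Nat.card (sv1 S a b '' dom1 S a b) ≤ S.card + 1 := by
  classical
  set roots : Finset ℝ := (S.filter fun j => a j ≠ 0).image (fun j => -(b j) / a j) with hroots
  set N : ℝ → ℕ := fun t => (roots.filter (· < t)).card with hNdef
  have key : ∀ t ∈ dom1 S a b, ∀ t' ∈ dom1 S a b, t < t' → N t = N t' →
      sv1 S a b t = sv1 S a b t' := by
    intro t ht t' ht' hlt hNe
    have hno : ∀ r ∈ roots, ¬ (t < r ∧ r < t') := by
      rintro r hr ⟨h1, h2⟩
      have hss : roots.filter (· < t) ⊂ roots.filter (· < t') := by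
        refine (Finset.ssubset_iff_of_subset
          (Finset.monotone_filter_right roots (fun x _ (hx : x < t) => hx.trans hlt))).mpr ?_
        exact ⟨r, Finset.mem_filter.mpr ⟨hr, h2⟩, fun hc =>
          absurd (Finset.mem_filter.mp hc).2 (not_lt.mpr h1.le)⟩
      exact absurd hNe (Nat.ne_of_lt (Finset.card_lt_card hss))
    funext j
    by_cases hj : j ∈ S
    · have h0 : a j * t + b j ≠ 0 := ht j hj
      have h0' : a j * t' + b j ≠ 0 := ht' j hj
      have hsame : 0 < (a j * t + b j) * (a j * t' + b j) := by
        by_cases ha : a j = 0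
        · rw [ha] at h0 ⊢
          simp only [zero_mul, zero_add] at h0 ⊢
          exact mul_self_pos.mpr h0
        · set r : ℝ := -(b j) / a j with hrdef
          have hr : r ∈ roots := by
            rw [hroots]
            exact Finset.mem_image.mpr ⟨j, Finset.mem_filter.mpr ⟨hj, ha⟩, rfl⟩
          have hfac : ∀ s : ℝ, a j * s + b j = a j * (s - r) := by
            intro s; rw [hrdef]; field_simp; ring
          have h1 : r ≠ t := by
            intro h; apply h0; rw [hfac t, ← h]; simp
          have h2 : r ≠ t' := by
            intro h; apply h0'; rw [hfac t', ← h]; simp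
          have h3 : ¬(t < r ∧ r < t') := hno r hr
          have h4 : 0 < (t - r) * (t' - r) := by
            rcases lt_or_ge r t with h | h
            · have : r < t' := h.trans hlt
              nlinarith
            · have hrt : t < r := lt_of_le_of_ne h (Ne.symm h1)
              have : t' ≤ r := by
                by_contra hcon
                exact h3 ⟨hrt, lt_of_not_ge hcon⟩
              have hrt' : t' < r := lt_of_le_of_ne this h2.symm
              nlinarith
          rw [hfac t, hfac t']
          have ha2 : 0 < a j ^ 2 := by positivity
          nlinarith
      have hiff : (0 < a j * t + b j) ↔ (0 < a j * t' + b j) := by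
        rcases mul_pos_iff.mp hsame with ⟨hp, hq⟩ | ⟨hp, hq⟩
        · simp [hp, hq]
        · constructor <;> intro h <;> linarith
      simp only [sv1, hj, true_and]
      exact decide_eq_decide.mpr hiff
    · simp [sv1, hj]
  have key' : ∀ t ∈ dom1 S a b, ∀ t' ∈ dom1 S a b, N t = N t' →
      sv1 S a b t = sv1 S a b t' := by
    intro t ht t' ht' hNe
    rcases lt_trichotomy t t' with h | h | h
    · exact key t ht t' ht' h hNe
    · rw [h]
    · exact (key t' ht' t ht h hNe.symm).symm
  have hNle : ∀ t, N t ≤ S.card := by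
    intro t
    calc N t ≤ roots.card := Finset.card_filter_le _ _
      _ ≤ (S.filter fun j => a j ≠ 0).card := Finset.card_image_le
      _ ≤ S.card := Finset.card_filter_le _ _
  rcases Set.eq_empty_or_nonempty (sv1 S a b '' dom1 S a b) with hA | ⟨σ₀, hσ₀⟩
  · rw [hA]; simp
  · have : Nat.card (sv1 S a b '' dom1 S a b) ≤ Nat.card (Fin (S.card + 1)) := by
      refine Nat.card_le_card_of_surjective
        (f := fun m : Fin (S.card + 1) =>
          if h : ∃ t, t ∈ dom1 S a b ∧ N t = m.1 then
            ⟨sv1 S a b h.choose, Set.mem_image_of_mem _ h.choose_spec.1⟩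
          else ⟨σ₀, hσ₀⟩) ?_
      rintro ⟨σ, t, ht, rfl⟩
      refine ⟨⟨N t, Nat.lt_succ_of_le (hNle t)⟩, ?_⟩
      have hex : ∃ s, s ∈ dom1 S a b ∧ N s = N t := ⟨t, ht, rfl⟩
      simp only [dif_pos hex]
      exact Subtype.ext (key' hex.choose hex.choose_spec.1 t ht hex.choose_spec.2)
    simpa using this

lemma line_param (c : ℝ × ℝ) (hc : c ≠ 0) (d : ℝ) (p : ℝ × ℝ) :
    c.1 * p.1 + c.2 * p.2 + d = 0 ↔
      ∃ t : ℝ, p = (-d / (c.1 ^ 2 + c.2 ^ 2)) • c + t • ((-c.2, c.1) : ℝ × ℝ) := by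
  have hc' : c.1 ≠ 0 ∨ c.2 ≠ 0 := by
    by_contra h
    push_neg at h
    exact hc (Prod.ext h.1 h.2)
  have hN : 0 < c.1 ^ 2 + c.2 ^ 2 := by
    rcases hc' with h | h <;> positivity
  have hN' : c.1 ^ 2 + c.2 ^ 2 ≠ 0 := ne_of_gt hN
  constructor
  · intro hp
    refine ⟨(c.1 * p.2 - c.2 * p.1) / (c.1 ^ 2 + c.2 ^ 2), ?_⟩
    have hd : d = -(c.1 * p.1 + c.2 * p.2) := by linarith
    apply Prod.ext <;>
      simp only [Prod.fst_add, Prod.snd_add, Prod.smul_fst, Prod.smul_snd, smul_eq_mul, hd] <;>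
      field_simp <;> ring
  · rintro ⟨t, rfl⟩
    simp only [Prod.fst_add, Prod.snd_add, Prod.smul_fst, Prod.smul_snd, smul_eq_mul]
    field_simp
    ring

lemma twoD_card (S : Finset ι) (c : ι → ℝ × ℝ) (d : ι → ℝ) (hc : ∀ j ∈ S, c j ≠ 0) :
    Nat.card (sv2 S c d '' dom2 S c d) ≤ S.card * (S.card + 1) / 2 + 1 := by
  classical
  revert hc
  induction S using Finset.induction_on with
  | empty =>
    intro _
    have hsub : (sv2 (∅ : Finset ι) c d '' dom2 ∅ c d) ⊆ {fun _ => false} := by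
      rintro σ ⟨p, -, rfl⟩
      have : sv2 (∅ : Finset ι) c d p = fun _ => false := by
        funext j; simp [sv2]
      simp [this]
    calc Nat.card (sv2 (∅ : Finset ι) c d '' dom2 ∅ c d)
        ≤ Nat.card ({fun _ => false} : Set (ι → Bool)) :=
          Nat.card_mono (Set.finite_singleton _) hsub
      _ ≤ 1 := by simp
      _ ≤ _ := by simp

  | @insert i S hiS ih =>
    intro hc
    classical
    have hci : c i ≠ 0 := hc i (Finset.mem_insert_self i S)
    have hcS : ∀ j ∈ S, c j ≠ 0 := fun j hj => hc j (Finset.mem_insert_of_mem hj)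
    set a₀ : ℝ × ℝ := (-(d i) / ((c i).1 ^ 2 + (c i).2 ^ 2)) • c i with ha₀
    set w : ℝ × ℝ := (-(c i).2, (c i).1) with hw
    set A1 : ι → ℝ := fun j => (c j).1 * w.1 + (c j).2 * w.2 with hA1
    set B1 : ι → ℝ := fun j => fA c d j a₀ with hB1
    have hcorr : ∀ (t : ℝ) (j : ι), fA c d j (a₀ + t • w) = A1 j * t + B1 j := by
      intro t j
      simp only [fA, hA1, hB1, Prod.fst_add, Prod.snd_add, Prod.smul_fst, Prod.smul_snd,
        smul_eq_mul]
      ring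
    have haff : ∀ (j : ι) (p p' : ℝ × ℝ) (s : ℝ),
        fA c d j (p + s • (p' - p)) = (1 - s) * fA c d j p + s * fA c d j p' := by
      intro j p p' s
      simp only [fA, Prod.fst_add, Prod.snd_add, Prod.fst_sub, Prod.snd_sub, Prod.smul_fst,
        Prod.smul_snd, smul_eq_mul]
      ring
    have hgood : ∀ p ∈ dom2 (insert i S) c d, ∀ p' ∈ dom2 (insert i S) c d,
        sv2 S c d p = sv2 S c d p' → 0 < fA c d i p → fA c d i p' < 0 →
        sv2 S c d p ∈ sv1 S A1 B1 '' dom1 S A1 B1 := by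
      intro p hp p' hp' hsv hpos hneg
      set s₀ : ℝ := fA c d i p / (fA c d i p - fA c d i p') with hs₀
      have hden : 0 < fA c d i p - fA c d i p' := by linarith
      have hden' : fA c d i p - fA c d i p' ≠ 0 := ne_of_gt hden
      have hs0 : 0 < s₀ := div_pos hpos hden
      have hs1 : s₀ < 1 := (div_lt_one hden).mpr (by linarith)
      have hqi : fA c d i (p + s₀ • (p' - p)) = 0 := by
        rw [haff, hs₀]
        field_simp
        ring
      have hsign : ∀ j ∈ S, 0 < fA c d j (p + s₀ • (p' - p)) * fA c d j p := by
        intro j hj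
        have h1 : fA c d j p ≠ 0 := hp j (Finset.mem_insert_of_mem hj)
        have h2 : fA c d j p' ≠ 0 := hp' j (Finset.mem_insert_of_mem hj)
        have hiff : (0 < fA c d j p) ↔ (0 < fA c d j p') := by
          have hcf := congrFun hsv j
          simp only [sv2, hj, true_and] at hcf
          exact decide_eq_decide.mp hcf
        rw [haff]
        by_cases hpj : 0 < fA c d j p
        · have hpj' := hiff.mp hpj
          have hq' : 0 < (1 - s₀) * fA c d j p + s₀ * fA c d j p' :=
            add_pos (mul_pos (by linarith) hpj) (mul_pos hs0 hpj')
          exact mul_pos hq' hpj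
        · have hneg1 : fA c d j p < 0 := lt_of_le_of_ne (not_lt.mp hpj) h1
          have hneg2 : fA c d j p' < 0 := by
            rcases lt_or_ge (fA c d j p') 0 with h | h
            · exact h
            · exact absurd (hiff.mpr (lt_of_le_of_ne h (Ne.symm h2))) hpj
          have hsum : (1 - s₀) * fA c d j p + s₀ * fA c d j p' < 0 := by
            have ha' := mul_neg_of_pos_of_neg (by linarith : (0:ℝ) < 1 - s₀) hneg1
            have hb' := mul_neg_of_pos_of_neg hs0 hneg2
            linarith
          exact mul_pos_of_neg_of_neg hsum hneg1
      obtain ⟨t, hqt⟩ := (line_param (c i) hci (d i) _).mp hqi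
      have hqt' : p + s₀ • (p' - p) = a₀ + t • w := by rw [ha₀, hw]; exact hqt
      have htdom : t ∈ dom1 S A1 B1 := by
        intro j hj
        rw [← hcorr t j, ← hqt']
        intro h0
        have hcontra := hsign j hj
        rw [h0] at hcontra
        simp at hcontra
      refine ⟨t, htdom, ?_⟩
      funext j
      by_cases hj : j ∈ S
      · have hiff2 : (0 < A1 j * t + B1 j) ↔ (0 < fA c d j p) := by
          rw [← hcorr t j, ← hqt']
          rcases mul_pos_iff.mp (hsign j hj) with ⟨h1', h2'⟩ | ⟨h1', h2'⟩
          · simp [h1', h2']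
          · constructor <;> intro h <;> linarith
        simp only [sv1, sv2, hj, true_and]
        exact decide_eq_decide.mpr hiff2
      · simp [sv1, sv2, hj]
    have hAfin : (sv2 (insert i S) c d '' dom2 (insert i S) c d).Finite :=
      sv2_image_finite _ c d _
    have hBfin : (sv2 S c d '' dom2 S c d).Finite := sv2_image_finite _ c d _
    have hGfin : (sv1 S A1 B1 '' dom1 S A1 B1).Finite := sv1_image_finite _ A1 B1 _
    set ρ : (ι → Bool) → (ι → Bool) := fun σ j => σ j && decide (j ∈ S) with hρ
    have hρval : ∀ p ∈ dom2 (insert i S) c d, ρ (sv2 (insert i S) c d p) = sv2 S c d p := by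
      intro p hp
      funext j
      by_cases hj : j ∈ S
      · simp [hρ, sv2, Finset.mem_insert, hj]
      · simp [hρ, sv2, hj]
    have hsubdom : dom2 (insert i S) c d ⊆ dom2 S c d :=
      fun p hp j hj => hp j (Finset.mem_insert_of_mem hj)
    have hmaps : ∀ σ ∈ hAfin.toFinset, ρ σ ∈ hBfin.toFinset := by
      intro σ hσ
      rw [Set.Finite.mem_toFinset] at hσ
      obtain ⟨p, hp, rfl⟩ := hσ
      rw [Set.Finite.mem_toFinset, hρval p hp]
      exact ⟨p, hsubdom hp, rfl⟩
    have hdet : ∀ σ ∈ sv2 (insert i S) c d '' dom2 (insert i S) c d,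
        ∀ σ' ∈ sv2 (insert i S) c d '' dom2 (insert i S) c d,
        ρ σ = ρ σ' → σ i = σ' i → σ = σ' := by
      rintro σ ⟨p, hp, rfl⟩ σ' ⟨p', hp', rfl⟩ hρe hie
      funext j
      by_cases hj : j ∈ S
      · have hcf := congrFun hρe j
        simpa [hρ, hj] using hcf
      · by_cases hji : j = i
        · rw [hji]; exact hie
        · simp [sv2, Finset.mem_insert, hji, hj]
    have hfiber : ∀ τ ∈ hBfin.toFinset,
        (hAfin.toFinset.filter fun σ => ρ σ = τ).card ≤
          if τ ∈ hGfin.toFinset then 2 else 1 := by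
      intro τ hτ
      split_ifs with hτG
      · have hle : (hAfin.toFinset.filter fun σ => ρ σ = τ).card ≤
            (Finset.univ : Finset Bool).card := by
          refine Finset.card_le_card_of_injOn (fun σ => σ i) (fun _ _ => Finset.mem_univ _) ?_
          intro σ hσ σ' hσ' hie
          simp only [Finset.coe_filter, Set.mem_setOf_eq, Set.Finite.mem_toFinset] at hσ hσ'
          exact hdet σ hσ.1 σ' hσ'.1 (hσ.2.trans hσ'.2.symm) hie
        simpa using hle
      · refine Finset.card_le_one.mpr ?_
        intro σ hσ σ' hσ'
        simp only [Finset.mem_filter, Set.Finite.mem_toFinset] at hσ hσ'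
        obtain ⟨hσA, hσρ⟩ := hσ
        obtain ⟨hσ'A, hσ'ρ⟩ := hσ'
        by_contra hne
        have hie : σ i ≠ σ' i := fun h => hne (hdet σ hσA σ' hσ'A (hσρ.trans hσ'ρ.symm) h)
        obtain ⟨p, hp, rfl⟩ := hσA
        obtain ⟨p', hp', rfl⟩ := hσ'A
        have hsvS : sv2 S c d p = sv2 S c d p' := by
          rw [← hρval p hp, ← hρval p' hp', hσρ, hσ'ρ]
        have h1 : fA c d i p ≠ 0 := hp i (Finset.mem_insert_self i S)
        have h2 : fA c d i p' ≠ 0 := hp' i (Finset.mem_insert_self i S)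
        have hie' : ¬ ((0 < fA c d i p) ↔ (0 < fA c d i p')) := by
          intro hiff
          apply hie
          simp only [sv2, Finset.mem_insert_self, true_and]
          exact decide_eq_decide.mpr hiff
        apply hτG
        rw [Set.Finite.mem_toFinset]
        rcases lt_or_ge 0 (fA c d i p) with hpos | hle
        · have hneg : fA c d i p' < 0 := by
            rcases lt_or_ge (fA c d i p') 0 with h | h
            · exact h
            · exact absurd (iff_of_true hpos (lt_of_le_of_ne h (Ne.symm h2))) hie'
          have hmem := hgood p hp p' hp' hsvS hpos hneg
          rw [← hσρ, hρval p hp]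
          exact hmem
        · have hneg : fA c d i p < 0 := lt_of_le_of_ne hle h1
          have hpos' : 0 < fA c d i p' := by
            rcases lt_or_ge 0 (fA c d i p') with h | h
            · exact h
            · exact absurd (iff_of_false (not_lt.mpr hle) (not_lt.mpr h)) hie'
          have hmem := hgood p' hp' p hp hsvS.symm hpos' hneg
          rw [← hσρ, hρval p hp, hsvS]
          exact hmem
    have hcount : hAfin.toFinset.card ≤ hBfin.toFinset.card + hGfin.toFinset.card := by
      calc hAfin.toFinset.card
          = ∑ τ ∈ hBfin.toFinset, (hAfin.toFinset.filter fun σ => ρ σ = τ).card :=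
            Finset.card_eq_sum_card_fiberwise hmaps
        _ ≤ ∑ τ ∈ hBfin.toFinset, (if τ ∈ hGfin.toFinset then 2 else 1) :=
            Finset.sum_le_sum hfiber
        _ = ∑ τ ∈ hBfin.toFinset, (1 + if τ ∈ hGfin.toFinset then 1 else 0) := by
            refine Finset.sum_congr rfl (fun τ _ => ?_)
            split_ifs <;> rfl
        _ = hBfin.toFinset.card + ∑ τ ∈ hBfin.toFinset, (if τ ∈ hGfin.toFinset then 1 else 0) := by
            rw [Finset.sum_add_distrib, Finset.sum_const, smul_eq_mul, mul_one]
        _ = hBfin.toFinset.card + (hBfin.toFinset.filter (· ∈ hGfin.toFinset)).card := by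
            rw [Finset.card_filter]
        _ ≤ hBfin.toFinset.card + hGfin.toFinset.card :=
            Nat.add_le_add_left
              (Finset.card_le_card (fun τ hτ => (Finset.mem_filter.mp hτ).2)) _
    have hBcard : hBfin.toFinset.card ≤ S.card * (S.card + 1) / 2 + 1 := by
      have hih := ih hcS
      rwa [Nat.card_coe_set_eq, Set.ncard_eq_toFinset_card _ hBfin] at hih
    have hGcard : hGfin.toFinset.card ≤ S.card + 1 := by
      have h1d := oneD_card S A1 B1
      rwa [Nat.card_coe_set_eq, Set.ncard_eq_toFinset_card _ hGfin] at h1d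
    have hAcard : Nat.card (sv2 (insert i S) c d '' dom2 (insert i S) c d) =
        hAfin.toFinset.card := by
      rw [Nat.card_coe_set_eq, Set.ncard_eq_toFinset_card _ hAfin]
    rw [hAcard, Finset.card_insert_of_notMem hiS]
    have h2 : (S.card + 1) * (S.card + 1 + 1) = S.card * (S.card + 1) + 2 * (S.card + 1) := by
      ring
    obtain ⟨k, hk⟩ := Nat.even_mul_succ_self S.card
    omega

end LinesAux

/-- A line in the plane: a 1-dimensional affine subspace of `ℝ × ℝ`,
described as `{a + t • v : t ∈ ℝ}` for some point `a` and nonzero direction `v`. -/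
def IsLine (L : Set (ℝ × ℝ)) : Prop :=
  ∃ a v : ℝ × ℝ, v ≠ 0 ∧ L = {p | ∃ t : ℝ, p = a + t • v}

/-- Any set of `n` distinct lines divides the plane into at most `n(n+1)/2 + 1` regions:
the complement of their union has finitely many connected components, and the number of
connected components is at most `n(n+1)/2 + 1`. -/
theorem lines_divide_plane_le (n : ℕ) (L : Finset (Set (ℝ × ℝ)))
    (hcard : L.card = n) (hline : ∀ ℓ ∈ L, IsLine ℓ) :
    Finite (ConnectedComponents ↥((⋃ ℓ ∈ L, ℓ)ᶜ)) ∧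
      Nat.card (ConnectedComponents ↥((⋃ ℓ ∈ L, ℓ)ᶜ)) ≤ n * (n + 1) / 2 + 1 := by
  classical
  have hfun : ∀ ℓ : Set (ℝ × ℝ), ∃ (c0 : ℝ × ℝ) (d0 : ℝ), ℓ ∈ L →
      c0 ≠ 0 ∧ ∀ p : ℝ × ℝ, p ∈ ℓ ↔ c0.1 * p.1 + c0.2 * p.2 + d0 = 0 := by
    intro ℓ
    by_cases hℓ : ℓ ∈ L
    · obtain ⟨a, v, hv, hL⟩ := hline ℓ hℓ
      refine ⟨(-v.2, v.1), v.2 * a.1 - v.1 * a.2, fun _ => ⟨?_, ?_⟩⟩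
      · intro h
        apply hv
        have h1 : -v.2 = 0 := congrArg Prod.fst h
        have h2 : v.1 = 0 := congrArg Prod.snd h
        exact Prod.ext h2 (neg_eq_zero.mp h1)
      · intro p
        rw [hL]
        show (∃ t : ℝ, p = a + t • v) ↔ -v.2 * p.1 + v.1 * p.2 + (v.2 * a.1 - v.1 * a.2) = 0
        constructor
        · rintro ⟨t, rfl⟩
          simp only [Prod.fst_add, Prod.snd_add, Prod.smul_fst, Prod.smul_snd, smul_eq_mul]
          ring
        · intro hp
          have hv' : v.1 ≠ 0 ∨ v.2 ≠ 0 := by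
            by_contra h; push_neg at h; exact hv (Prod.ext h.1 h.2)
          rcases hv' with h | h
          · refine ⟨(p.1 - a.1) / v.1, ?_⟩
            apply Prod.ext <;>
              simp only [Prod.fst_add, Prod.snd_add, Prod.smul_fst, Prod.smul_snd,
                smul_eq_mul] <;>
              field_simp
            · ring
            · linear_combination hp
          · refine ⟨(p.2 - a.2) / v.2, ?_⟩
            apply Prod.ext <;>
              simp only [Prod.fst_add, Prod.snd_add, Prod.smul_fst, Prod.smul_snd,
                smul_eq_mul] <;>
              field_simp
            · linear_combination -hp
            · ring
    · exact ⟨(1, 0), 0, fun h => absurd h hℓ⟩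
  choose c0 d0 hcd using hfun
  have hc : ∀ ℓ ∈ L, c0 ℓ ≠ 0 := fun ℓ h => (hcd ℓ h).1
  have hmem : ∀ ℓ ∈ L, ∀ p : ℝ × ℝ, p ∈ ℓ ↔ fA c0 d0 ℓ p = 0 := fun ℓ h p => (hcd ℓ h).2 p
  have hU : ((⋃ ℓ ∈ L, ℓ)ᶜ) = dom2 L c0 d0 := by
    ext p
    simp only [Set.mem_compl_iff, Set.mem_iUnion, exists_prop, not_exists, not_and]
    constructor
    · intro h j hj h0
      exact h j hj ((hmem j hj p).mpr h0)
    · intro h j hj hpj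
      exact h j hj ((hmem j hj p).mp hpj)
  rw [hU]
  -- same sign vector implies same connected component
  have hkey : ∀ p (hp : p ∈ dom2 L c0 d0), ∀ q (hq : q ∈ dom2 L c0 d0),
      sv2 L c0 d0 p = sv2 L c0 d0 q →
      ((⟨p, hp⟩ : ↥(dom2 L c0 d0)) : ConnectedComponents ↥(dom2 L c0 d0)) = ↑(⟨q, hq⟩ : ↥(dom2 L c0 d0)) := by
    intro p hp q hq hsv
    set s : Set (ℝ × ℝ) :=
      {z | ∀ j ∈ L, (0 < fA c0 d0 j z ↔ 0 < fA c0 d0 j p) ∧ fA c0 d0 j z ≠ 0} with hs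
    have hconv : Convex ℝ s := by
      intro x hx y hy a b ha hb hab
      simp only [hs, Set.mem_setOf_eq] at hx hy ⊢
      intro j hj
      obtain ⟨hx1, hx2⟩ := hx j hj
      obtain ⟨hy1, hy2⟩ := hy j hj
      have haffc : fA c0 d0 j (a • x + b • y) = a * fA c0 d0 j x + b * fA c0 d0 j y := by
        simp only [fA, Prod.fst_add, Prod.snd_add, Prod.smul_fst, Prod.smul_snd, smul_eq_mul]
        linear_combination (d0 j) * hab.symm
      by_cases hpj : 0 < fA c0 d0 j p
      · have hxp : 0 < fA c0 d0 j x := hx1.mpr hpj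
        have hyp : 0 < fA c0 d0 j y := hy1.mpr hpj
        have hz : 0 < fA c0 d0 j (a • x + b • y) := by
          rw [haffc]
          rcases eq_or_lt_of_le ha with h0 | h0
          · have hb1 : b = 1 := by linarith
            rw [← h0, hb1]; simpa using hyp
          · exact add_pos_of_pos_of_nonneg (mul_pos h0 hxp) (mul_nonneg hb hyp.le)
        exact ⟨iff_of_true hz hpj, ne_of_gt hz⟩
      · have hxp : fA c0 d0 j x < 0 := lt_of_le_of_ne (not_lt.mp (mt hx1.mp hpj)) hx2
        have hyp : fA c0 d0 j y < 0 := lt_of_le_of_ne (not_lt.mp (mt hy1.mp hpj)) hy2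
        have hz : fA c0 d0 j (a • x + b • y) < 0 := by
          rw [haffc]
          rcases eq_or_lt_of_le ha with h0 | h0
          · have hb1 : b = 1 := by linarith
            rw [← h0, hb1]; simpa using hyp
          · have h3 := mul_neg_of_pos_of_neg h0 hxp
            have h4 := mul_nonpos_of_nonneg_of_nonpos hb hyp.le
            linarith
        exact ⟨iff_of_false (not_lt.mpr hz.le) hpj, ne_of_lt hz⟩
    have hsub : s ⊆ dom2 L c0 d0 := by
      intro z hz j hj
      exact (hz j hj).2
    have hps : p ∈ s := fun j hj => ⟨Iff.rfl, hp j hj⟩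
    have hqs : q ∈ s := by
      intro j hj
      have hcf := congrFun hsv j
      simp only [sv2, hj, true_and] at hcf
      exact ⟨(decide_eq_decide.mp hcf).symm, hq j hj⟩
    have hpre : IsPreconnected (Subtype.val ⁻¹' s : Set ↥(dom2 L c0 d0)) := by
      apply Topology.IsInducing.subtypeVal.isPreconnected_image.mp
      rw [Subtype.image_preimage_coe, Set.inter_eq_self_of_subset_right hsub]
      exact hconv.isPreconnected
    have hmem2 : (⟨q, hq⟩ : ↥(dom2 L c0 d0)) ∈ Subtype.val ⁻¹' s := hqs
    have hmem1 : (⟨p, hp⟩ : ↥(dom2 L c0 d0)) ∈ Subtype.val ⁻¹' s := hps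
    exact ConnectedComponents.coe_eq_coe'.mpr
      (hpre.subset_connectedComponent hmem2 hmem1)
  have hbound : Nat.card ↥(sv2 L c0 d0 '' dom2 L c0 d0) ≤ n * (n + 1) / 2 + 1 := by
    rw [← hcard]
    exact twoD_card L c0 d0 hc
  have hAfin : (sv2 L c0 d0 '' dom2 L c0 d0).Finite := sv2_image_finite _ _ _ _
  haveI : Finite ↥(sv2 L c0 d0 '' dom2 L c0 d0) := hAfin.to_subtype
  rcases isEmpty_or_nonempty (ConnectedComponents ↥(dom2 L c0 d0)) with hE | hNE
  · refine ⟨Finite.of_subsingleton, ?_⟩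
    rw [Nat.card_of_isEmpty]
    omega
  · have hpick : ∀ σ : Set (ℝ × ℝ) → Bool, ∃ p : ℝ × ℝ,
        σ ∈ sv2 L c0 d0 '' dom2 L c0 d0 → p ∈ dom2 L c0 d0 ∧ sv2 L c0 d0 p = σ := by
      intro σ
      by_cases h : σ ∈ sv2 L c0 d0 '' dom2 L c0 d0
      · obtain ⟨p, hp, hps⟩ := h
        exact ⟨p, fun _ => ⟨hp, hps⟩⟩
      · exact ⟨0, fun hcon => absurd hcon h⟩
    choose pick hpickspec using hpick
    have hsurj : Function.Surjective (fun σ : ↥(sv2 L c0 d0 '' dom2 L c0 d0) =>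
        ((⟨pick σ.1, (hpickspec σ.1 σ.2).1⟩ : ↥(dom2 L c0 d0)) :
          ConnectedComponents ↥(dom2 L c0 d0))) := by
      intro C
      obtain ⟨u, rfl⟩ := ConnectedComponents.surjective_coe C
      refine ⟨⟨sv2 L c0 d0 u.1, ⟨u.1, u.2, rfl⟩⟩, ?_⟩
      have hs2 := hpickspec (sv2 L c0 d0 u.1) ⟨u.1, u.2, rfl⟩
      exact hkey _ hs2.1 u.1 u.2 hs2.2
    exact ⟨Finite.of_surjective _ hsurj,
      le_trans (Nat.card_le_card_of_surjective _ hsurj) hbound⟩
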